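/- arXiv:2502.17193 — 3 statements merged into one kernel-verified Lean document; each statement's English description precedes it below -/
import Mathlib

section
/- Let A be a skew-symmetric endomorphism of a 3-dimensional Lorentzian vector space (V, ⟨-,-⟩) all of whose (complex) eigenvalues are real and not all zero. Then A has eigenvalues 0, λ, −λ for some λ ≠ 0, and the 0-eigenvector is spacelike. -/
/-- The standard Minkowski scalar product of signature (2,1) on ℝ³. -/
def minkowski (u v : Fin 3 → ℝ) : ℝ := u 0 * v 0 + u 1 * v 1 - u 2 * v 2

/-- A skew-symmetric endomorphism of 3-dimensional Minkowski space all of whose complex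
eigenvalues are real (its characteristic polynomial splits over ℝ) and which is not nilpotent
(not all eigenvalues zero) has eigenvalues `0, λ, -λ` for some `λ ≠ 0`, and every nonzero
vector in its kernel is spacelike. -/
theorem stmt2 (A : (Fin 3 → ℝ) →ₗ[ℝ] (Fin 3 → ℝ))
    (hskew : ∀ u v : Fin 3 → ℝ, minkowski (A u) v + minkowski u (A v) = 0)
    (hreal : Polynomial.Splits ((LinearMap.charpoly A).map (RingHom.id ℝ)))
    (hnz : ¬ IsNilpotent A) :
    ∃ l : ℝ, l ≠ 0 ∧
      Module.End.HasEigenvalue A l ∧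
      Module.End.HasEigenvalue A (-l) ∧
      Module.End.HasEigenvalue A 0 ∧
      ∀ v : Fin 3 → ℝ, v ≠ 0 → A v = 0 → minkowski v v > 0 := by
  open Polynomial in
  set a : ℝ := A (Pi.single 1 1) 0 with ha
  set b : ℝ := A (Pi.single 2 1) 0 with hb
  set c : ℝ := A (Pi.single 2 1) 1 with hc
  -- entry relations coming from skew-symmetry
  have h00 : A (Pi.single 0 1) 0 = 0 := by
    have := hskew (Pi.single 0 1) (Pi.single 0 1)
    simp [minkowski, Pi.single_apply] at this; linarith
  have h11 : A (Pi.single 1 1) 1 = 0 := by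
    have := hskew (Pi.single 1 1) (Pi.single 1 1)
    simp [minkowski, Pi.single_apply] at this; linarith
  have h22 : A (Pi.single 2 1) 2 = 0 := by
    have := hskew (Pi.single 2 1) (Pi.single 2 1)
    simp [minkowski, Pi.single_apply] at this; linarith
  have h01 : A (Pi.single 0 1) 1 = -a := by
    have := hskew (Pi.single 1 1) (Pi.single 0 1)
    simp [minkowski, Pi.single_apply] at this; linarith
  have h02 : A (Pi.single 0 1) 2 = b := by
    have := hskew (Pi.single 2 1) (Pi.single 0 1)
    simp [minkowski, Pi.single_apply] at this; linarith
  have h12 : A (Pi.single 1 1) 2 = c := by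
    have := hskew (Pi.single 2 1) (Pi.single 1 1)
    simp [minkowski, Pi.single_apply] at this; linarith
  -- explicit formula for A
  have hAv : ∀ v : Fin 3 → ℝ,
      A v = ![a * v 1 + b * v 2, -(a * v 0) + c * v 2, b * v 0 + c * v 1] := by
    intro v
    have hv : v = v 0 • (Pi.single 0 1 : Fin 3 → ℝ) + v 1 • (Pi.single 1 1 : Fin 3 → ℝ)
        + v 2 • (Pi.single 2 1 : Fin 3 → ℝ) := by
      funext i; fin_cases i <;> simp [Pi.single_apply]
    conv_lhs => rw [hv]
    simp only [map_add, map_smul]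
    funext i
    fin_cases i <;>
      simp [h00, h11, h22, h01, h02, h12, ← ha, ← hb, ← hc] <;> ring
  clear_value a b c
  clear ha hb hc h00 h11 h22 h01 h02 h12 hskew
  -- the characteristic polynomial
  have hcp : LinearMap.charpoly A = X^3 + C (a^2 - b^2 - c^2) * X := by
    have hM : LinearMap.toMatrix' A = !![0,a,b; -a,0,c; b,c,0] := by
      ext i j
      rw [LinearMap.toMatrix'_apply, hAv]
      fin_cases i <;> fin_cases j <;> simp
    have h1 : LinearMap.charpoly A = Matrix.charpoly !![0,a,b; -a,0,c; b,c,0] := by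
      rw [← LinearMap.charpoly_toMatrix A (Pi.basisFun ℝ (Fin 3)),
        LinearMap.toMatrix_eq_toMatrix', hM]
    rw [h1, Matrix.charpoly, Matrix.det_fin_three]
    simp [Matrix.charmatrix_apply_eq, Matrix.charmatrix_apply_ne]
    ring
  -- the key quantity is positive
  have hkey : b^2 + c^2 - a^2 > 0 := by
    have hk : a^2 - b^2 - c^2 ≤ 0 := by
      have hsp2 : Polynomial.Splits (X^2 + C (a^2 - b^2 - c^2)) :=
        Polynomial.Splits.of_dvd (by simpa using hreal) (LinearMap.charpoly_monic A).ne_zero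
          ⟨X, by rw [hcp]; ring⟩
      obtain ⟨r, hr⟩ := Polynomial.Splits.exists_eval_eq_zero hsp2
        (by rw [Polynomial.degree_X_pow_add_C (by norm_num)]; norm_num)
      simp only [eval_add, eval_pow, eval_X, eval_C] at hr
      nlinarith [sq_nonneg r]
    have hk' : a^2 - b^2 - c^2 ≠ 0 := by
      intro h0
      apply hnz
      refine ⟨3, ?_⟩
      have := LinearMap.aeval_self_charpoly A
      rw [hcp, h0] at this
      simpa using this
    cases lt_or_eq_of_le hk with
    | inl h => linarith
    | inr h => exact absurd h hk'
  set l : ℝ := Real.sqrt (b^2 + c^2 - a^2) with hldef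
  have hlpos : 0 < l := Real.sqrt_pos.mpr hkey
  have hl2 : l^2 = b^2 + c^2 - a^2 := Real.sq_sqrt (le_of_lt hkey)
  refine ⟨l, ne_of_gt hlpos, ?_, ?_, ?_, ?_⟩
  · -- eigenvalue l
    apply Module.End.hasEigenvalue_of_hasEigenvector
      (x := ![a*c + l*b, l*c - a*b, l^2 + a^2])
    constructor
    · rw [Module.End.mem_eigenspace_iff, hAv]
      funext i
      fin_cases i <;> simp
      · ring
      · ring
      · linear_combination (-l) * hl2
    · intro h
      have := congr_fun h 2
      simp at this
      nlinarith
  · -- eigenvalue -l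
    apply Module.End.hasEigenvalue_of_hasEigenvector
      (x := ![a*c - l*b, -(l*c) - a*b, l^2 + a^2])
    constructor
    · rw [Module.End.mem_eigenspace_iff, hAv]
      funext i
      fin_cases i <;> simp
      · ring
      · ring
      · linear_combination l * hl2
    · intro h
      have := congr_fun h 2
      simp at this
      nlinarith
  · -- eigenvalue 0
    apply Module.End.hasEigenvalue_of_hasEigenvector (x := ![c, -b, a])
    constructor
    · rw [Module.End.mem_eigenspace_iff, hAv]
      funext i
      fin_cases i <;> simp <;> ring
    · intro h
      have h0 := congr_fun h 0
      have h1 := congr_fun h 1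
      have h2 := congr_fun h 2
      simp at h0 h1 h2
      nlinarith
  · -- kernel vectors are spacelike
    intro v hv hAv0
    rw [hAv] at hAv0
    have e1 : a * v 1 + b * v 2 = 0 := by
      have := congr_fun hAv0 0; simpa using this
    have e2 : -(a * v 0) + c * v 2 = 0 := by
      have := congr_fun hAv0 1; simpa using this
    have e3 : b * v 0 + c * v 1 = 0 := by
      have := congr_fun hAv0 2; simpa using this
    have hS : v 0 ^ 2 + v 1 ^ 2 + v 2 ^ 2 > 0 := by
      rcases (by
        by_contra hcon
        push_neg at hcon
        apply hv
        funext i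
        fin_cases i <;> simp [hcon] : v 0 ≠ 0 ∨ v 1 ≠ 0 ∨ v 2 ≠ 0) with h | h | h <;>
        nlinarith [sq_nonneg (v 0), sq_nonneg (v 1), sq_nonneg (v 2), sq_pos_of_ne_zero h]
    have key : (a^2 + b^2 + c^2) * (v 0 ^ 2 + v 1 ^ 2 - v 2 ^ 2)
        = (b^2 + c^2 - a^2) * (v 0 ^ 2 + v 1 ^ 2 + v 2 ^ 2) := by
      linear_combination (2*(a*v 1 - b*v 2)) * e1 + (-(2*(a*v 0)) - 2*(c*v 2)) * e2
    have hsum : a^2 + b^2 + c^2 > 0 := by nlinarith [sq_nonneg a]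
    show v 0 * v 0 + v 1 * v 1 - v 2 * v 2 > 0
    nlinarith [mul_pos hkey hS, key]
end

section
/- Let A be a nonzero nilpotent skew-symmetric endomorphism of a 3-dimensional Lorentzian vector space V. Then A is 3-step nilpotent: A² ≠ 0 and A³ = 0, and there exists u ∈ V such that {A²u, Au, u} is a basis of V. -/
set_option maxHeartbeats 1000000 in
/-- A nonzero nilpotent skew-symmetric endomorphism of 3-dimensional Minkowski space is
3-step nilpotent: `A² ≠ 0`, `A³ = 0`, and there is `u` such that `{A²u, Au, u}` is a basis. -/
theorem stmt4 (A : (Fin 3 → ℝ) →ₗ[ℝ] (Fin 3 → ℝ)) (hA : A ≠ 0)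
    (hskew : ∀ u v : Fin 3 → ℝ, minkowski (A u) v + minkowski u (A v) = 0)
    (hnil : IsNilpotent A) :
    A ∘ₗ A ≠ 0 ∧ A ∘ₗ A ∘ₗ A = 0 ∧
    ∃ u : Fin 3 → ℝ, LinearIndependent ℝ ![A (A u), A u, u] := by
  set M := LinearMap.toMatrix' A with hMdef
  have hAm : ∀ u, A u = M.mulVec u := fun u => by
    rw [← Matrix.toLin'_apply, hMdef, Matrix.toLin'_toMatrix']
  have key : ∀ i j : Fin 3, minkowski (M.mulVec (Pi.single i 1)) (Pi.single j 1)
      + minkowski (Pi.single i 1) (M.mulVec (Pi.single j 1)) = 0 := by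
    intro i j; rw [← hAm, ← hAm]; exact hskew _ _
  have h00 := key 0 0
  have h11 := key 1 1
  have h22 := key 2 2
  have h01 := key 0 1
  have h02 := key 0 2
  have h12 := key 1 2
  simp only [minkowski, Matrix.mulVec_single_one, Matrix.col_apply, mul_one, Pi.single_apply, Fin.reduceEq,
    if_true, if_false, reduceIte] at h00 h11 h22 h01 h02 h12
  have e00 : M 0 0 = 0 := by linarith
  have e11 : M 1 1 = 0 := by linarith
  have e22 : M 2 2 = 0 := by linarith
  have e10 : M 1 0 = -M 0 1 := by linarith
  have e20 : M 2 0 = M 0 2 := by linarith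
  have e21 : M 2 1 = M 1 2 := by linarith
  clear h00 h11 h22 h01 h02 h12
  have hA3 : A ^ 3 = 0 := by
    have h := hnil.charpoly_eq_X_pow_finrank
    have h2 := A.aeval_self_charpoly
    rw [h] at h2
    simpa [Module.finrank_fin_fun] using h2
  have hM3 : ∀ u, M.mulVec (M.mulVec (M.mulVec u)) = 0 := by
    intro u
    have : (A ^ 3) u = 0 := by rw [hA3]; rfl
    simpa [pow_succ, Module.End.mul_apply, hAm] using this
  have ha := congrFun (hM3 (Pi.single 1 1)) 0
  have hp := congrFun (hM3 (Pi.single 2 1)) 0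
  have hq := congrFun (hM3 (Pi.single 2 1)) 1
  simp only [Matrix.mulVec_single_one, Matrix.col_apply, mul_one, Matrix.mulVec, dotProduct,
    Fin.sum_univ_three, Pi.zero_apply, Pi.single_apply, Fin.reduceEq, if_true, if_false,
    reduceIte, mul_zero, zero_mul, add_zero, zero_add, mul_one] at ha hp hq
  rw [e00, e11, e22, e10, e20, e21] at ha hp hq
  have ha' : M 0 1 * (M 0 2 ^ 2 + M 1 2 ^ 2 - M 0 1 ^ 2) = 0 := by linear_combination ha
  have hp' : M 0 2 * (M 0 2 ^ 2 + M 1 2 ^ 2 - M 0 1 ^ 2) = 0 := by linear_combination hp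
  have hq' : M 1 2 * (M 0 2 ^ 2 + M 1 2 ^ 2 - M 0 1 ^ 2) = 0 := by linear_combination hq
  have hMne : ¬(M 0 1 = 0 ∧ M 0 2 = 0 ∧ M 1 2 = 0) := by
    rintro ⟨x1, x2, x3⟩
    apply hA
    apply LinearMap.ext
    intro u
    rw [hAm]
    funext i
    fin_cases i <;>
      simp [Matrix.mulVec, dotProduct, Fin.sum_univ_three, e00, e11, e22, e10, e20, e21,
        x1, x2, x3]
  have hsum : (M 0 1 ^ 2 + M 0 2 ^ 2 + M 1 2 ^ 2) * (M 0 2 ^ 2 + M 1 2 ^ 2 - M 0 1 ^ 2) = 0 := by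
    linear_combination M 0 1 * ha' + M 0 2 * hp' + M 1 2 * hq'
  have hs : M 0 2 ^ 2 + M 1 2 ^ 2 - M 0 1 ^ 2 = 0 := by
    by_contra h
    apply hMne
    have h2 : M 0 1 ^ 2 + M 0 2 ^ 2 + M 1 2 ^ 2 = 0 := by
      rcases mul_eq_zero.mp hsum with h' | h'
      · exact h'
      · exact absurd h' h
    refine ⟨?_, ?_, ?_⟩ <;>
      nlinarith [sq_nonneg (M 0 1), sq_nonneg (M 0 2), sq_nonneg (M 1 2)]
  have ha0 : M 0 1 ≠ 0 := by
    intro h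
    apply hMne
    refine ⟨h, ?_, ?_⟩ <;> nlinarith [sq_nonneg (M 0 2), sq_nonneg (M 1 2)]
  refine ⟨?_, ?_, ?_⟩
  · intro h
    have h2 : ((A ∘ₗ A) (Pi.single 2 1)) 2 = 0 := by rw [h]; rfl
    simp only [LinearMap.comp_apply, hAm, Matrix.mulVec_single_one, Matrix.col_apply, mul_one, Matrix.mulVec,
      dotProduct, Fin.sum_univ_three] at h2
    rw [e20, e21, e22] at h2
    apply ha0
    have : M 0 1 ^ 2 = 0 := by linear_combination h2 - hs
    exact pow_eq_zero_iff (by norm_num) |>.mp this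
  · apply LinearMap.ext
    intro u
    have : (A ^ 3) u = 0 := by rw [hA3]; rfl
    simpa [pow_succ, Module.End.mul_apply] using this
  · refine ⟨Pi.single 2 1, ?_⟩
    have h1 : A (Pi.single 2 1) = ![M 0 2, M 1 2, 0] := by
      rw [hAm]
      funext i
      fin_cases i <;> simp [Matrix.mulVec_single, e22]
    have h2 : A (A (Pi.single 2 1)) =
        ![M 0 1 * M 1 2, -(M 0 1 * M 0 2), M 0 2 ^ 2 + M 1 2 ^ 2] := by
      rw [h1, hAm]
      funext i
      fin_cases i <;>
        simp [Matrix.mulVec, dotProduct, Fin.sum_univ_three, e00, e11, e22, e10, e20,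
          e21] <;> ring
    have h3 : (Pi.single 2 1 : Fin 3 → ℝ) = ![0, 0, 1] := by
      funext i; fin_cases i <;> simp
    rw [h2, h1, h3]
    apply (Matrix.linearIndependent_rows_iff_isUnit (A := (Matrix.of ![![M 0 1 * M 1 2, -(M 0 1 * M 0 2),
      M 0 2 ^ 2 + M 1 2 ^ 2], ![M 0 2, M 1 2, 0], ![0, 0, 1]] : Matrix (Fin 3) (Fin 3) ℝ))).mpr
    refine (Matrix.isUnit_iff_isUnit_det _).mpr (isUnit_iff_ne_zero.mpr ?_)
    rw [Matrix.det_fin_three]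
    simp only [Matrix.of_apply, Matrix.cons_val', Matrix.cons_val_zero, Matrix.cons_val_one, Matrix.head_cons,
      Matrix.empty_val', Matrix.cons_val_fin_one, Matrix.head_fin_const, Matrix.cons_val_two,
      Matrix.tail_cons]
    intro h
    apply ha0
    have : M 0 1 ^ 3 = 0 := by linear_combination h - M 0 1 * hs
    exact pow_eq_zero_iff (by norm_num) |>.mp this
end

section
/- Let L = ℝ ⋉_σ ℝ³ be a solvable 4-dimensional Lie algebra with abelian derived algebra equal to ℝ³ (i.e. [L,L] = ℝ³). Then there is no one-dimensional subspace I of L spanned by an element U such that the induced map on L/I is a nonzero skew-symmetric endomorphism for some nondegenerate symmetric bilinear form of signature (3,0) or (2,1) on L/I. -/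
/-- Let `L` be a solvable 4-dimensional real Lie algebra whose derived algebra is a
3-dimensional abelian ideal `N` (so `L ≅ ℝ ⋉ ℝ³` with `[L,L] = ℝ³`). Then there is no
one-dimensional subspace `I = span {U}` such that the endomorphism of `L / I` induced by
`ad U` is nonzero and skew-symmetric for a nondegenerate symmetric bilinear form of
signature (3,0) or (2,1) on `L / I`: any such induced skew-symmetric map must vanish. -/
theorem stmt9 {L : Type*} [LieRing L] [LieAlgebra ℝ L] [Module.Finite ℝ L]
    (hdim : Module.finrank ℝ L = 4)
    (N : LieIdeal ℝ L) (habel : IsLieAbelian N)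
    (hNdim : Module.finrank ℝ (↥N) = 3)
    (hder : ⁅(⊤ : LieIdeal ℝ L), (⊤ : LieIdeal ℝ L)⁆ = N)
    (U : L) (hU : U ≠ 0)
    (A : (L ⧸ Submodule.span ℝ {U}) →ₗ[ℝ] (L ⧸ Submodule.span ℝ {U}))
    (hA : ∀ x : L, A (Submodule.Quotient.mk x) = Submodule.Quotient.mk ⁅U, x⁆)
    (q : LinearMap.BilinForm ℝ (L ⧸ Submodule.span ℝ {U}))
    (hsymm : ∀ u v, q u v = q v u)
    (ε : ℝ) (hε : ε = 1 ∨ ε = -1)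
    (b : Module.Basis (Fin 3) ℝ (L ⧸ Submodule.span ℝ {U}))
    (hq : ∀ i j : Fin 3, q (b i) (b j) = if i = j then ![1, 1, ε] i else 0)
    (hskew : ∀ u v, q (A u) v + q u (A v) = 0) :
    A = 0 := by
  classical
  have hε2 : ε * ε = 1 := by rcases hε with h | h <;> rw [h] <;> norm_num
  have hεne : ε ≠ 0 := by rcases hε with h | h <;> rw [h] <;> norm_num
  set M : Fin 3 → Fin 3 → ℝ := fun i j => b.repr (A (b j)) i with hM
  have hrep : ∀ j, A (b j) = M 0 j • b 0 + M 1 j • b 1 + M 2 j • b 2 := by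
    intro j
    have h := b.sum_repr (A (b j))
    rw [Fin.sum_univ_three] at h
    exact h.symm
  have hqA : ∀ i j : Fin 3, q (b i) (A (b j)) = M i j * ![(1:ℝ), 1, ε] i := by
    intro i j
    rw [hrep j]
    simp only [map_add, map_smul, smul_eq_mul, hq]
    fin_cases i <;> norm_num [Finsupp.single_apply, Fin.ext_iff] <;> exact Or.inl rfl
  have hskw : ∀ i j : Fin 3,
      M j i * ![(1:ℝ), 1, ε] j + M i j * ![(1:ℝ), 1, ε] i = 0 := by
    intro i j
    have h := hskew (b i) (b j)
    rw [hsymm (A (b i)) (b j), hqA j i, hqA i j] at h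
    exact h
  -- concrete skew relations
  have s00 : M 0 0 * 1 + M 0 0 * 1 = 0 := hskw 0 0
  have s11 : M 1 1 * 1 + M 1 1 * 1 = 0 := hskw 1 1
  have s22 : M 2 2 * ε + M 2 2 * ε = 0 := hskw 2 2
  have s01 : M 1 0 * 1 + M 0 1 * 1 = 0 := hskw 0 1
  have s02 : M 2 0 * ε + M 0 2 * 1 = 0 := hskw 0 2
  have s12 : M 2 1 * ε + M 1 2 * 1 = 0 := hskw 1 2
  have hM00 : M 0 0 = 0 := by linarith
  have hM11 : M 1 1 = 0 := by linarith
  have hM22 : M 2 2 = 0 := by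
    have h : M 2 2 * ε = 0 := by linarith
    rcases mul_eq_zero.mp h with h' | h'
    · exact h'
    · exact absurd h' hεne
  have hM10 : M 1 0 = -M 0 1 := by linarith
  have hM20 : M 2 0 = -(M 0 2 * ε) := by linear_combination ε * s02 - M 2 0 * hε2
  have hM21 : M 2 1 = -(M 1 2 * ε) := by linear_combination ε * s12 - M 2 1 * hε2
  by_cases hUN : U ∈ N
  · -- U ∈ N : the induced map is 2-step nilpotent, hence zero
    have hA2 : ∀ v : L ⧸ Submodule.span ℝ {U}, A (A v) = 0 := by
      intro v
      obtain ⟨x, rfl⟩ := Submodule.Quotient.mk_surjective _ v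
      rw [hA, hA]
      have h1 : ⁅U, x⁆ ∈ N := by
        rw [← hder]
        exact LieSubmodule.lie_mem_lie (LieSubmodule.mem_top U) (LieSubmodule.mem_top x)
      have h2 : ⁅U, ⁅U, x⁆⁆ = 0 := by
        have h3 : (⁅(⟨U, hUN⟩ : N), (⟨⁅U, x⁆, h1⟩ : N)⁆ : N) = 0 :=
          trivial_lie_zero _ _ _ _
        have h4 : (↑(⁅(⟨U, hUN⟩ : N), (⟨⁅U, x⁆, h1⟩ : N)⁆ : N) : L) = ⁅U, ⁅U, x⁆⁆ := rfl
        rw [h3] at h4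
        exact h4.symm.trans rfl
      rw [h2]
      exact Submodule.Quotient.mk_zero _
    have hnil : ∀ i j : Fin 3,
        M 0 j * (M i 0 * ![(1:ℝ), 1, ε] i) + M 1 j * (M i 1 * ![(1:ℝ), 1, ε] i)
          + M 2 j * (M i 2 * ![(1:ℝ), 1, ε] i) = 0 := by
      intro i j
      have h : q (b i) (A (A (b j))) = 0 := by rw [hA2 (b j)]; simp
      rw [hrep j] at h
      simp only [map_add, map_smul, smul_eq_mul, hqA] at h
      linarith
    have n00 : M 0 0 * (M 0 0 * 1) + M 1 0 * (M 0 1 * 1) + M 2 0 * (M 0 2 * 1) = 0 := hnil 0 0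
    have n22 : M 0 2 * (M 2 0 * ε) + M 1 2 * (M 2 1 * ε) + M 2 2 * (M 2 2 * ε) = 0 := hnil 2 2
    rw [hM20, hM21, hM22] at n22
    have key : M 0 2 * M 0 2 + M 1 2 * M 1 2 = 0 := by
      linear_combination -n22 - (M 0 2 * M 0 2 + M 1 2 * M 1 2) * hε2
    have h02 : M 0 2 = 0 := by
      have ha := mul_self_nonneg (M 0 2)
      have hb := mul_self_nonneg (M 1 2)
      have hc : M 0 2 * M 0 2 = 0 := by linarith
      exact mul_self_eq_zero.mp hc
    have h12 : M 1 2 = 0 := by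
      have ha := mul_self_nonneg (M 0 2)
      have hb := mul_self_nonneg (M 1 2)
      have hc : M 1 2 * M 1 2 = 0 := by linarith
      exact mul_self_eq_zero.mp hc
    rw [hM00, hM10, hM20, h02] at n00
    have h01 : M 0 1 = 0 := by
      have hc : M 0 1 * M 0 1 = 0 := by linear_combination -n00
      exact mul_self_eq_zero.mp hc
    have hM10' : M 1 0 = 0 := by rw [hM10, h01]; ring
    have hM20' : M 2 0 = 0 := by rw [hM20, h02]; ring
    have hM21' : M 2 1 = 0 := by rw [hM21, h12]; ring
    have hMall : ∀ i j : Fin 3, M i j = 0 := by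
      intro i j
      fin_cases i <;> fin_cases j <;>
        first
          | exact hM00 | exact hM11 | exact hM22 | exact h01 | exact h02 | exact h12
          | exact hM10' | exact hM20' | exact hM21'
    refine b.ext fun j => ?_
    rw [hrep j, hMall, hMall, hMall]
    simp
  · -- U ∉ N : the induced map would be surjective, impossible for a skew map in dim 3
    exfalso
    have hNsub : Module.finrank ℝ (N : Submodule ℝ L) = 3 := hNdim
    have hdisj : Submodule.span ℝ {U} ⊓ (N : Submodule ℝ L) = ⊥ := by
      rw [Submodule.eq_bot_iff]
      rintro x ⟨hx1, hx2⟩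
      obtain ⟨α, rfl⟩ := Submodule.mem_span_singleton.mp hx1
      rcases eq_or_ne α 0 with h | h
      · rw [h, zero_smul]
      · exfalso
        apply hUN
        have : α⁻¹ • (α • U) ∈ (N : Submodule ℝ L) := Submodule.smul_mem _ _ hx2
        rwa [smul_smul, inv_mul_cancel₀ h, one_smul] at this
    have htop : Submodule.span ℝ {U} ⊔ (N : Submodule ℝ L) = ⊤ := by
      apply Submodule.eq_top_of_finrank_eq
      have h1 := Submodule.finrank_sup_add_finrank_inf_eq (Submodule.span ℝ {U})
        (N : Submodule ℝ L)
      rw [hdisj] at h1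
      simp only [finrank_bot, add_zero] at h1
      rw [h1, finrank_span_singleton hU, hNsub, hdim]
    have hrange : (N : Submodule ℝ L) ≤ LinearMap.range (LieAlgebra.ad ℝ L U) := by
      have hco : ((⁅(⊤ : LieIdeal ℝ L), (⊤ : LieIdeal ℝ L)⁆ : LieIdeal ℝ L) : Submodule ℝ L)
          = Submodule.span ℝ {m | ∃ x ∈ (⊤ : LieIdeal ℝ L), ∃ n ∈ (⊤ : LieIdeal ℝ L), ⁅x, n⁆ = m} :=
        LieSubmodule.lieIdeal_oper_eq_linear_span' _ _
      have hN' : (N : Submodule ℝ L)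
          = Submodule.span ℝ {m | ∃ x ∈ (⊤ : LieIdeal ℝ L), ∃ n ∈ (⊤ : LieIdeal ℝ L), ⁅x, n⁆ = m} := by
        rw [← hco, hder]
      rw [hN']
      rw [Submodule.span_le]
      rintro m ⟨x, -, y, -, rfl⟩
      have hx : x ∈ Submodule.span ℝ {U} ⊔ (N : Submodule ℝ L) := htop ▸ Submodule.mem_top
      have hy : y ∈ Submodule.span ℝ {U} ⊔ (N : Submodule ℝ L) := htop ▸ Submodule.mem_top
      obtain ⟨s, hs, n, hn, rfl⟩ := Submodule.mem_sup.mp hx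
      obtain ⟨t, ht, n', hn', rfl⟩ := Submodule.mem_sup.mp hy
      obtain ⟨α, rfl⟩ := Submodule.mem_span_singleton.mp hs
      obtain ⟨β, rfl⟩ := Submodule.mem_span_singleton.mp ht
      have habn : ⁅n, n'⁆ = 0 := by
        have h3 : (⁅(⟨n, hn⟩ : N), (⟨n', hn'⟩ : N)⁆ : N) = 0 := trivial_lie_zero _ _ _ _
        have h4 : (↑(⁅(⟨n, hn⟩ : N), (⟨n', hn'⟩ : N)⁆ : N) : L) = ⁅n, n'⁆ := rfl
        rw [h3] at h4
        exact h4.symm.trans rfl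
      have hexp : ⁅α • U + n, β • U + n'⁆
          = α • ⁅U, n'⁆ - β • ⁅U, n⁆ := by
        rw [add_lie, lie_add, lie_add, smul_lie, smul_lie, lie_smul, lie_smul, lie_self, habn,
          ← lie_skew U n]
        simp only [smul_zero, zero_add, add_zero, smul_neg]
        abel
      rw [hexp]
      apply Submodule.sub_mem
      · exact Submodule.smul_mem _ _ ⟨n', rfl⟩
      · exact Submodule.smul_mem _ _ ⟨n, rfl⟩
    have hsurj : Function.Surjective A := by
      intro v
      obtain ⟨y, rfl⟩ := Submodule.Quotient.mk_surjective _ v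
      have hy : y ∈ Submodule.span ℝ {U} ⊔ (N : Submodule ℝ L) := htop ▸ Submodule.mem_top
      obtain ⟨s, hs, n, hn, rfl⟩ := Submodule.mem_sup.mp hy
      obtain ⟨x, hx⟩ := hrange hn
      refine ⟨Submodule.Quotient.mk x, ?_⟩
      rw [hA]
      have h1 : (Submodule.Quotient.mk (s + n) : L ⧸ Submodule.span ℝ {U})
          = Submodule.Quotient.mk n := by
        rw [Submodule.Quotient.mk_add]
        rw [(Submodule.Quotient.mk_eq_zero _).mpr hs, zero_add]
      rw [h1]
      have hx' : ⁅U, x⁆ = n := hx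
      rw [hx']
    have hinj : Function.Injective A :=
      (LinearMap.injective_iff_surjective_of_finrank_eq_finrank rfl).mpr hsurj
    -- kernel vector
    have hker : A (M 1 2 • b 0 - M 0 2 • b 1 + M 0 1 • b 2) = 0 := by
      rw [map_add, map_sub, map_smul, map_smul, map_smul, hrep 0, hrep 1, hrep 2,
        hM00, hM11, hM22, hM10, hM20, hM21]
      match_scalars <;> ring
    have hw : M 1 2 • b 0 - M 0 2 • b 1 + M 0 1 • b 2 = 0 := by
      apply hinj
      rw [hker, map_zero]
    -- coefficients vanish
    have hc : ∀ i : Fin 3, b.repr (M 1 2 • b 0 - M 0 2 • b 1 + M 0 1 • b 2) i = 0 := by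
      intro i; rw [hw]; simp
    have h12 : M 1 2 = 0 := by
      have := hc 0
      simpa [Finsupp.single_apply, Fin.ext_iff] using this
    have h02 : M 0 2 = 0 := by
      have := hc 1
      simp only [map_add, map_sub, map_smul, Module.Basis.repr_self, smul_eq_mul] at this
      simpa [Finsupp.single_apply, Fin.ext_iff] using this
    have h01 : M 0 1 = 0 := by
      have := hc 2
      simpa [Finsupp.single_apply, Fin.ext_iff] using this
    have hM10' : M 1 0 = 0 := by rw [hM10, h01]; ring
    have hM20' : M 2 0 = 0 := by rw [hM20, h02]; ring
    have hM21' : M 2 1 = 0 := by rw [hM21, h12]; ring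
    have hMall : ∀ i j : Fin 3, M i j = 0 := by
      intro i j
      fin_cases i <;> fin_cases j <;>
        first
          | exact hM00 | exact hM11 | exact hM22 | exact h01 | exact h02 | exact h12
          | exact hM10' | exact hM20' | exact hM21'
    have hA0 : A = 0 := by
      refine b.ext fun j => ?_
      rw [hrep j, hMall, hMall, hMall]
      simp
    obtain ⟨x, hx⟩ := hsurj (b 0)
    rw [hA0] at hx
    exact b.ne_zero 0 (by simpa using hx.symm)
end
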